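/- Let A and O be arbitrary N×N complex matrices and let H be an N×N complex matrix such that exp(θH) lies in the image φ(G) for every real θ. Then ∫_G ∫_G Tr( φ(g⁻) A φ(g⁻)⁻¹ · [H, φ(g⁺) O φ(g⁺)⁻¹] ) dμ(g⁺) dμ(g⁻) = 0, where [X,Y] := XY − YX and exp is the matrix exponential. -/

import Mathlib

open MeasureTheory Matrix

section Aux
attribute [local instance] Matrix.linftyOpNormedAddCommGroup Matrix.linftyOpNormedRing
  Matrix.linftyOpNormedAlgebra Matrix.linftyOpNormedSpace

lemma aux_comm_of_exp {N : ℕ} (H M : Matrix (Fin N) (Fin N) ℂ)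
    (h : ∀ θ : ℝ, NormedSpace.exp (θ • H) * M = M * NormedSpace.exp (θ • H)) :
    H * M = M * H := by
  have hd : HasDerivAt (fun θ : ℝ => NormedSpace.exp (θ • H))
      (NormedSpace.exp ((0:ℝ) • H) * H) 0 := hasDerivAt_exp_smul_const H 0
  have h1 : HasDerivAt (fun θ : ℝ => NormedSpace.exp (θ • H) * M)
      (NormedSpace.exp ((0:ℝ) • H) * H * M) 0 := hd.mul_const M
  have h2 : HasDerivAt (fun θ : ℝ => M * NormedSpace.exp (θ • H))
      (M * (NormedSpace.exp ((0:ℝ) • H) * H)) 0 := hd.const_mul M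
  have heq : (fun θ : ℝ => NormedSpace.exp (θ • H) * M)
      = fun θ : ℝ => M * NormedSpace.exp (θ • H) := funext h
  rw [heq] at h1
  have := h1.unique h2
  simpa [zero_smul, NormedSpace.exp_zero] using this

/-- vanishing mean. For a compact group `G` with normalized Haar measure and a
continuous unitary representation `φ`, if `H` is a matrix with `exp(θH) ∈ φ(G)` for every real
`θ`, then for arbitrary matrices `A`, `O`:
`∫_G ∫_G Tr(φ(g⁻) A φ(g⁻)⁻¹ [H, φ(g⁺) O φ(g⁺)⁻¹]) dμ(g⁺) dμ(g⁻) = 0`. -/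
theorem stmt_5
    {G : Type} [Group G] [TopologicalSpace G] [IsTopologicalGroup G] [CompactSpace G]
    [MeasurableSpace G] [BorelSpace G]
    (μ : Measure G) [μ.IsHaarMeasure] [IsProbabilityMeasure μ]
    {N : ℕ} (hN : 1 ≤ N)
    (φ : G →* Matrix.unitaryGroup (Fin N) ℂ)
    (hcont : Continuous fun g => (φ g : Matrix (Fin N) (Fin N) ℂ))
    (A O H : Matrix (Fin N) (Fin N) ℂ)
    (hH : ∀ θ : ℝ, ∃ g : G, (φ g : Matrix (Fin N) (Fin N) ℂ) = NormedSpace.exp (θ • H)) :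
    (∫ gm, ∫ gp,
        Matrix.trace ((φ gm : Matrix (Fin N) (Fin N) ℂ) * A *
            (φ gm⁻¹ : Matrix (Fin N) (Fin N) ℂ) *
          ⁅H, (φ gp : Matrix (Fin N) (Fin N) ℂ) * O *
            (φ gp⁻¹ : Matrix (Fin N) (Fin N) ℂ)⁆) ∂μ ∂μ) = 0 := by
  classical
  set c : G → Matrix (Fin N) (Fin N) ℂ :=
    fun g => (φ g : Matrix (Fin N) (Fin N) ℂ) * O * (φ g⁻¹ : Matrix (Fin N) (Fin N) ℂ)
    with hc_def
  have hc_cont : Continuous c := by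
    exact (hcont.matrix_mul continuous_const).matrix_mul (hcont.comp continuous_inv)
  have hc_int : @Integrable _ UniformSpace.toTopologicalSpace
      SeminormedAddGroup.toContinuousENorm _ _ c μ :=
    hc_cont.integrable_of_hasCompactSupport (HasCompactSupport.of_compactSpace _)
  set M : Matrix (Fin N) (Fin N) ℂ := ∫ g, c g ∂μ with hM_def
  -- invariance of M under conjugation
  have hM : ∀ h : G, (φ h : Matrix (Fin N) (Fin N) ℂ) * M * (φ h⁻¹ : Matrix (Fin N) (Fin N) ℂ)
      = M := by
    intro h
    let L : Matrix (Fin N) (Fin N) ℂ →ₗ[ℂ] Matrix (Fin N) (Fin N) ℂ :=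
      { toFun := fun Y => (φ h : Matrix (Fin N) (Fin N) ℂ) * Y * (φ h⁻¹ : _)
        map_add' := fun x y => by simp [Matrix.mul_add, Matrix.add_mul]
        map_smul' := fun r x => by simp [Matrix.mul_smul, Matrix.smul_mul] }
    have hL := (LinearMap.toContinuousLinearMap L).integral_comp_comm hc_int
    have step1 : (φ h : Matrix (Fin N) (Fin N) ℂ) * M * (φ h⁻¹ : Matrix (Fin N) (Fin N) ℂ)
        = ∫ g, (φ h : Matrix (Fin N) (Fin N) ℂ) * c g * (φ h⁻¹ : _) ∂μ := hL.symm
    rw [step1]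
    have step2 : (fun g => (φ h : Matrix (Fin N) (Fin N) ℂ) * c g * (φ h⁻¹ : _))
        = fun g => c (h * g) := by
      funext g
      simp only [hc_def, _root_.map_mul, _root_.mul_inv_rev, Submonoid.coe_mul, mul_assoc]
    rw [step2, integral_mul_left_eq_self c h]
  -- H commutes with M
  have hcomm : H * M = M * H := by
    apply aux_comm_of_exp
    intro θ
    obtain ⟨g, hg⟩ := hH θ
    have hinv : (φ g⁻¹ : Matrix (Fin N) (Fin N) ℂ) * (φ g : _) = 1 := by
      have h1 : φ g⁻¹ * φ g = 1 := by rw [← _root_.map_mul, inv_mul_cancel, _root_.map_one]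
      calc (φ g⁻¹ : Matrix (Fin N) (Fin N) ℂ) * (φ g : _)
          = ((φ g⁻¹ * φ g : Matrix.unitaryGroup (Fin N) ℂ) : Matrix (Fin N) (Fin N) ℂ) := rfl
        _ = 1 := by rw [h1]; rfl
    have := hM g
    have h2 : (φ g : Matrix (Fin N) (Fin N) ℂ) * M = M * (φ g : _) := by
      calc (φ g : Matrix (Fin N) (Fin N) ℂ) * M
          = (φ g : _) * M * ((φ g⁻¹ : Matrix (Fin N) (Fin N) ℂ) * (φ g : _)) := by
            rw [hinv, mul_one]
        _ = ((φ g : _) * M * (φ g⁻¹ : Matrix (Fin N) (Fin N) ℂ)) * (φ g : _) := by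
            rw [mul_assoc, mul_assoc, mul_assoc]
        _ = M * (φ g : _) := by rw [this]
    rwa [hg] at h2
  have hbr : H * M - M * H = 0 := sub_eq_zero.2 hcomm
  -- inner integral vanishes
  have hinner : ∀ gm : G, (∫ gp,
      Matrix.trace ((φ gm : Matrix (Fin N) (Fin N) ℂ) * A *
        (φ gm⁻¹ : Matrix (Fin N) (Fin N) ℂ) * ⁅H, c gp⁆) ∂μ) = 0 := by
    intro gm
    set X : Matrix (Fin N) (Fin N) ℂ :=
      (φ gm : Matrix (Fin N) (Fin N) ℂ) * A * (φ gm⁻¹ : _) with hX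
    let T : Matrix (Fin N) (Fin N) ℂ →ₗ[ℂ] ℂ :=
      { toFun := fun Y => (X * (H * Y - Y * H)).trace
        map_add' := fun x y => by
          simp [Matrix.mul_add, Matrix.add_mul, Matrix.mul_sub, Matrix.sub_mul,
            Matrix.trace_add, Matrix.trace_sub]
          ring
        map_smul' := fun r x => by
          simp [Matrix.mul_smul, Matrix.smul_mul, Matrix.trace_smul, ← smul_sub,
            smul_eq_mul] }
    have hT := (LinearMap.toContinuousLinearMap T).integral_comp_comm hc_int
    simp only [Ring.lie_def]
    have : (∫ gp, (X * (H * c gp - c gp * H)).trace ∂μ) = T M := hT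
    rw [this]
    show (X * (H * M - M * H)).trace = 0
    rw [hbr, Matrix.mul_zero, Matrix.trace_zero]
  exact (integral_congr_ae (Filter.Eventually.of_forall hinner)).trans (integral_zero _ _)

end Aux
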